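/- Let A = [[H_uu, 0, Jᵤᵀ],[0, W, J_ρᵀ],[Jᵤ, J_ρ, 0]] with Jᵤ invertible, H_uu symmetric positive semidefinite and W symmetric positive definite. Then A is invertible. -/

import Mathlib

open Matrix

/-- The IP-Gauss-Newton saddle-point matrix
`A = [[H,0,Jᵤᵀ],[0,W,J_ρᵀ],[Jᵤ,J_ρ,0]]` with `Jᵤ` invertible, `H` symmetric positive
semidefinite and `W` symmetric positive definite, is invertible. -/
theorem stmt17 {nu nρ : ℕ}
    (H Ju : Matrix (Fin nu) (Fin nu) ℝ) (W : Matrix (Fin nρ) (Fin nρ) ℝ)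
    (Jρ : Matrix (Fin nu) (Fin nρ) ℝ)
    (hH : H.PosSemidef) (hW : W.PosDef) (hJu : IsUnit Ju.det) :
    IsUnit (fromBlocks (fromBlocks H 0 0 W) (fromRows Juᵀ Jρᵀ)
      (fromCols Ju Jρ) 0).det := by
  rw [isUnit_iff_ne_zero]
  intro hdet
  obtain ⟨v, hv0, hv⟩ := (Matrix.exists_mulVec_eq_zero_iff).2 hdet
  set u : Fin nu → ℝ := fun i => v (Sum.inl (Sum.inl i)) with hu
  set ρ : Fin nρ → ℝ := fun i => v (Sum.inl (Sum.inr i)) with hρ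
  set l : Fin nu → ℝ := fun i => v (Sum.inr i) with hl
  have hv' : v = Sum.elim (Sum.elim u ρ) l := by
    funext x; rcases x with (x | x) | x <;> rfl
  rw [hv'] at hv
  rw [fromBlocks_mulVec, fromBlocks_mulVec, fromRows_mulVec] at hv
  simp only [Sum.elim_comp_inl, Sum.elim_comp_inr] at hv
  rw [fromCols_mulVec_sumElim] at hv
  have e1 : H *ᵥ u + Juᵀ *ᵥ l = 0 := by
    funext i
    have := congrFun hv (Sum.inl (Sum.inl i))
    simpa using this
  have e2 : W *ᵥ ρ + Jρᵀ *ᵥ l = 0 := by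
    funext i
    have := congrFun hv (Sum.inl (Sum.inr i))
    simpa using this
  have e3 : Ju *ᵥ u + Jρ *ᵥ ρ = 0 := by
    funext i
    have := congrFun hv (Sum.inr i)
    simpa using this
  -- key scalar identity
  have key : u ⬝ᵥ (H *ᵥ u) + ρ ⬝ᵥ (W *ᵥ ρ) = 0 := by
    have h1 : u ⬝ᵥ (H *ᵥ u + Juᵀ *ᵥ l) = 0 := by rw [e1, dotProduct_zero]
    have h2 : ρ ⬝ᵥ (W *ᵥ ρ + Jρᵀ *ᵥ l) = 0 := by rw [e2, dotProduct_zero]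
    have h3 : u ⬝ᵥ (Juᵀ *ᵥ l) + ρ ⬝ᵥ (Jρᵀ *ᵥ l) = 0 := by
      have : (Ju *ᵥ u + Jρ *ᵥ ρ) ⬝ᵥ l = 0 := by rw [e3, zero_dotProduct]
      rw [add_dotProduct] at this
      rw [dotProduct_mulVec, vecMul_transpose, dotProduct_mulVec, vecMul_transpose]
      exact this
    rw [dotProduct_add] at h1 h2
    linarith
  have hρ0 : ρ = 0 := by
    by_contra hne
    have hWpos := hW.dotProduct_mulVec_pos hne
    have hHpos := hH.dotProduct_mulVec_nonneg u
    simp only [star_trivial] at hWpos hHpos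
    linarith
  have hu0 : u = 0 := by
    have : Ju *ᵥ u = 0 := by
      have := e3
      rw [hρ0, mulVec_zero, add_zero] at this
      exact this
    have h := congrArg (fun w => Ju⁻¹ *ᵥ w) this
    simpa [mulVec_mulVec, nonsing_inv_mul Ju hJu] using h
  have hl0 : l = 0 := by
    have : Juᵀ *ᵥ l = 0 := by
      have := e1
      rw [hu0, mulVec_zero, zero_add] at this
      exact this
    have h := congrArg (fun w => (Juᵀ)⁻¹ *ᵥ w) this
    have hJut : IsUnit Juᵀ.det := by rwa [det_transpose]
    simpa [mulVec_mulVec, nonsing_inv_mul Juᵀ hJut] using h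
  apply hv0
  rw [hv', hu0, hρ0, hl0]
  funext x; rcases x with (x | x) | x <;> rfl
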